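/- Let μ > 0 and g > 0, and define Ψ : ℝ² → ℝ by Ψ(a) = μ‖a‖²/2 + g‖a‖. Then for every α ∈ ℝ², the supremum over a ∈ ℝ² of ⟪α, a⟫ − Ψ(a) is attained, and it equals 0 if ‖α‖ ≤ g and equals (‖α‖ − g)²/(2μ) if ‖α‖ > g. That is, the convex conjugate of Ψ is Ψ*(α) = 0 for ‖α‖ ≤ g and Ψ*(α) = (‖α‖ − g)²/(2μ) for ‖α‖ > g. -/

import Mathlib

/-- Convex conjugate of the Bingham energy density `Ψ(a) = μ‖a‖²/2 + g‖a‖` on `ℝ²`: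
the supremum defining `Ψ*(α)` is attained and equals `0` if `‖α‖ ≤ g` and
`(‖α‖ − g)²/(2μ)` if `‖α‖ > g`. -/
theorem stmt_7 {μ g : ℝ} (hμ : 0 < μ) (hg : 0 < g) (α : EuclideanSpace ℝ (Fin 2)) :
    IsGreatest
      (Set.range fun a : EuclideanSpace ℝ (Fin 2) =>
        (inner ℝ α a : ℝ) - (μ * ‖a‖ ^ 2 / 2 + g * ‖a‖))
      (if ‖α‖ ≤ g then 0 else (‖α‖ - g) ^ 2 / (2 * μ)) := by
  by_cases h : ‖α‖ ≤ g
  · simp only [if_pos h]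
    constructor
    · exact ⟨0, by simp⟩
    · rintro x ⟨a, rfl⟩
      have h1 : (inner ℝ α a : ℝ) ≤ ‖α‖ * ‖a‖ := real_inner_le_norm α a
      have h2 : (0:ℝ) ≤ ‖a‖ := norm_nonneg a
      nlinarith [sq_nonneg ‖a‖]
  · simp only [if_neg h]
    push_neg at h
    have hα : 0 < ‖α‖ := lt_trans hg h
    constructor
    · set c : ℝ := (‖α‖ - g) / (μ * ‖α‖) with hc
      have hc0 : 0 ≤ c := div_nonneg (by linarith) (by positivity)
      refine ⟨c • α, ?_⟩
      have hinner : (inner ℝ α (c • α) : ℝ) = c * ‖α‖ ^ 2 := by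
        rw [real_inner_smul_right, real_inner_self_eq_norm_sq]
      have hnorm : ‖c • α‖ = c * ‖α‖ := by
        rw [norm_smul, Real.norm_eq_abs, abs_of_nonneg hc0]
      show (inner ℝ α (c • α) : ℝ) - (μ * ‖c • α‖ ^ 2 / 2 + g * ‖c • α‖) = _
      rw [hinner, hnorm, hc]
      field_simp
      ring
    · rintro x ⟨a, rfl⟩
      have h1 : (inner ℝ α a : ℝ) ≤ ‖α‖ * ‖a‖ := real_inner_le_norm α a
      have h2 : (0:ℝ) ≤ ‖a‖ := norm_nonneg a
      have key : (‖α‖ - g) * ‖a‖ - μ * ‖a‖ ^ 2 / 2 ≤ (‖α‖ - g) ^ 2 / (2 * μ) := by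
        rw [le_div_iff₀ (by positivity : (0:ℝ) < 2 * μ)]
        nlinarith [sq_nonneg (μ * ‖a‖ - (‖α‖ - g))]
      nlinarith [key, h1, h2]
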